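/- In characteristic 2, every bialgebra structure on the trigonometric coalgebra C_k satisfies c² = c + λs, cs = sc = λs, s² = (λ+1)s for some λ ∈ k; in particular bialgebra multiplication laws on C_k are in bijection with elements of k. -/

import Mathlib

set_option linter.unusedSectionVars false
set_option maxHeartbeats 1000000

open TensorProduct

/-- basis vector `c` of the trigonometric coalgebra -/
def trigC (k : Type*) [Field k] : k × k := (1, 0)
/-- basis vector `s` of the trigonometric coalgebra -/
def trigS (k : Type*) [Field k] : k × k := (0, 1)

/-- comultiplication of the trigonometric coalgebra:
`Δ(c) = c⊗c - s⊗s`, `Δ(s) = s⊗c + c⊗s`. -/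
noncomputable def trigComul (k : Type*) [Field k] :
    (k × k) →ₗ[k] (k × k) ⊗[k] (k × k) :=
  (LinearMap.fst k k k).smulRight (trigC k ⊗ₜ trigC k - trigS k ⊗ₜ trigS k) +
  (LinearMap.snd k k k).smulRight (trigS k ⊗ₜ trigC k + trigC k ⊗ₜ trigS k)

/-- counit of the trigonometric coalgebra: `ε(c) = 1`, `ε(s) = 0`. -/
def trigCounit (k : Type*) [Field k] : (k × k) →ₗ[k] k := LinearMap.fst k k k

/-- A bialgebra structure on a fixed `k`-coalgebra `(V, Δ, ε)`: an associative
unital `k`-bilinear multiplication for which `Δ` and `ε` are algebra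
homomorphisms (the multiplication on `V ⊗ V` being the componentwise one). -/
structure BialgebraStructure (k V : Type*) [CommRing k] [AddCommGroup V] [Module k V]
    (Δ : V →ₗ[k] V ⊗[k] V) (ε : V →ₗ[k] k) where
  mul : V →ₗ[k] V →ₗ[k] V
  one : V
  mul_assoc : ∀ x y z : V, mul (mul x y) z = mul x (mul y z)
  one_mul : ∀ x : V, mul one x = x
  mul_one : ∀ x : V, mul x one = x
  comul_one : Δ one = one ⊗ₜ[k] one
  comul_mul : ∀ x y : V, Δ (mul x y) = TensorProduct.map₂ mul mul (Δ x) (Δ y)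
  counit_one : ε one = 1
  counit_mul : ∀ x y : V, ε (mul x y) = ε x * ε y

/-! ### Auxiliary material -/

@[simp] lemma trigC_fst (k : Type*) [Field k] : (trigC k).1 = 1 := rfl
@[simp] lemma trigC_snd (k : Type*) [Field k] : (trigC k).2 = 0 := rfl
@[simp] lemma trigS_fst (k : Type*) [Field k] : (trigS k).1 = 0 := rfl
@[simp] lemma trigS_snd (k : Type*) [Field k] : (trigS k).2 = 1 := rfl

lemma pair_eq (k : Type*) [Field k] (a b : k) :
    ((a, b) : k × k) = a • trigC k + b • trigS k := by
  simp [trigC, trigS, Prod.ext_iff]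

/-- the multiplication with table `c² = c + l s`, `cs = sc = l s`, `s² = (l+1) s` -/
def trigMul (k : Type*) [Field k] (l : k) : (k × k) →ₗ[k] (k × k) →ₗ[k] (k × k) :=
  LinearMap.mk₂ k (fun x y => (x.1 * y.1, l * (x.1 + x.2) * (y.1 + y.2) + x.2 * y.2))
    (fun m m' n => by simp [Prod.ext_iff]; constructor <;> ring)
    (fun a m n => by simp [Prod.ext_iff, smul_eq_mul]; constructor <;> ring)
    (fun m n n' => by simp [Prod.ext_iff]; constructor <;> ring)
    (fun a m n => by simp [Prod.ext_iff, smul_eq_mul]; constructor <;> ring)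

section
variable (k : Type*) [Field k] [CharP k 2]

lemma m_cc (l : k) : trigMul k l (trigC k) (trigC k) = ((1 : k), l) := by
  simp [trigMul, Prod.ext_iff]
lemma m_cs (l : k) : trigMul k l (trigC k) (trigS k) = ((0 : k), l) := by
  simp [trigMul, Prod.ext_iff]
lemma m_sc (l : k) : trigMul k l (trigS k) (trigC k) = ((0 : k), l) := by
  simp [trigMul, Prod.ext_iff]
lemma m_ss (l : k) : trigMul k l (trigS k) (trigS k) = ((0 : k), l + 1) := by
  simp [trigMul, Prod.ext_iff]

lemma trigComul_apply (x : k × k) :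
    trigComul k x = x.1 • (trigC k ⊗ₜ trigC k - trigS k ⊗ₜ trigS k) +
      x.2 • (trigS k ⊗ₜ trigC k + trigC k ⊗ₜ trigS k) := by
  simp [trigComul]

/-- the bialgebra structure corresponding to `l : k` -/
noncomputable def trigBS (l : k) :
    BialgebraStructure k (k × k) (trigComul k) (trigCounit k) where
  mul := trigMul k l
  one := ((1 : k), (1 : k))
  mul_assoc := fun x y z => by
    have h2 : (2 : k) = 0 := CharTwo.two_eq_zero
    obtain ⟨x1, x2⟩ := x; obtain ⟨y1, y2⟩ := y; obtain ⟨z1, z2⟩ := z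
    simp only [trigMul, LinearMap.mk₂_apply, Prod.ext_iff]
    constructor
    · ring
    · linear_combination (l * x1 * y1 * z2 - l * x2 * y1 * z1) * h2
  one_mul := fun x => by
    have h2 : (2 : k) = 0 := CharTwo.two_eq_zero
    obtain ⟨x1, x2⟩ := x
    simp only [trigMul, LinearMap.mk₂_apply, Prod.ext_iff]
    constructor
    · ring
    · linear_combination l * (x1 + x2) * h2
  mul_one := fun x => by
    have h2 : (2 : k) = 0 := CharTwo.two_eq_zero
    obtain ⟨x1, x2⟩ := x
    simp only [trigMul, LinearMap.mk₂_apply, Prod.ext_iff]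
    constructor
    · ring
    · linear_combination l * (x1 + x2) * h2
  comul_one := by
    have h2 : (2 : k) = 0 := CharTwo.two_eq_zero
    rw [trigComul_apply, pair_eq]
    simp only [Prod.fst_add, Prod.snd_add, Prod.smul_fst, Prod.smul_snd,
      trigC_fst, trigC_snd, trigS_fst, trigS_snd, smul_eq_mul, mul_one, mul_zero,
      add_zero, zero_add]
    simp only [tmul_add, add_tmul, smul_tmul, tmul_smul, smul_smul]
    match_scalars
    all_goals first | ring1 | linear_combination h2 | linear_combination -h2
  comul_mul := fun x y => by
    have h2 : (2 : k) = 0 := CharTwo.two_eq_zero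
    obtain ⟨x1, x2⟩ := x
    obtain ⟨y1, y2⟩ := y
    simp only [trigComul, LinearMap.add_apply, LinearMap.smulRight_apply,
      LinearMap.fst_apply, LinearMap.snd_apply, map_add, map_sub, map_smul,
      LinearMap.sub_apply, LinearMap.smul_apply,
      TensorProduct.map₂_apply_tmul, TensorProduct.map_tmul,
      trigMul, LinearMap.mk₂_apply]
    simp only [trigC_fst, trigC_snd, trigS_fst, trigS_snd, mul_one, mul_zero, one_mul,
      zero_mul, add_zero, zero_add]
    simp only [pair_eq]
    simp only [tmul_add, add_tmul, smul_tmul, tmul_smul, smul_smul]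
    match_scalars
    · ring1
    · linear_combination -(x1 * y1 * (l + 1) - l * x1 * y2 - l * x2 * y1 +
        x2 * y2 * (2 * l ^ 2 + l)) * h2
    · ring1
    · ring1
  counit_one := rfl
  counit_mul := fun x y => by simp [trigCounit, trigMul]

lemma BS_ext {k V : Type*} [CommRing k] [AddCommGroup V] [Module k V]
    {Δ : V →ₗ[k] V ⊗[k] V} {ε : V →ₗ[k] k}
    {B₁ B₂ : BialgebraStructure k V Δ ε} (h : B₁.mul = B₂.mul) (h' : B₁.one = B₂.one) :
    B₁ = B₂ := by
  cases B₁; cases B₂; dsimp at h h'; subst h; subst h'; rfl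

lemma trig_table (B : BialgebraStructure k (k × k) (trigComul k) (trigCounit k)) :
    B.one = ((1 : k), (1 : k)) ∧
      B.mul = trigMul k ((B.mul (trigC k) (trigC k)).2) := by
  have h2 : (2 : k) = 0 := CharTwo.two_eq_zero
  have o1 : B.one.1 = 1 := B.counit_one
  -- extract second component of the unit from `comul_one`
  set φ : (k × k) ⊗[k] (k × k) →ₗ[k] k :=
    (TensorProduct.lid k k).toLinearMap ∘ₗ
      TensorProduct.map (LinearMap.snd k k k) (LinearMap.snd k k k) with hφdef
  have hφ := congrArg (⇑φ) B.comul_one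
  rw [trigComul_apply] at hφ
  simp only [hφdef, map_add, map_smul, map_sub, LinearMap.comp_apply,
    TensorProduct.map_tmul, LinearEquiv.coe_coe, TensorProduct.lid_tmul,
    LinearMap.snd_apply, trigC_snd, trigS_snd, smul_eq_mul, mul_one, mul_zero,
    zero_mul, one_mul, add_zero, zero_add, zero_smul, smul_zero] at hφ
  have hsq : (B.one.2 - 1) ^ 2 = 0 := by
    linear_combination -hφ - o1 - B.one.2 * h2
  have o2 : B.one.2 = 1 := sub_eq_zero.mp (pow_eq_zero_iff two_ne_zero |>.mp hsq)
  have hone : B.one = ((1 : k), (1 : k)) := by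
    rw [Prod.ext_iff]; exact ⟨o1, o2⟩
  refine ⟨hone, ?_⟩
  set β := (B.mul (trigC k) (trigC k)).2 with hβ
  -- first components from counit multiplicativity
  have hcc1 : (B.mul (trigC k) (trigC k)).1 = 1 := by
    simpa [trigCounit] using B.counit_mul (trigC k) (trigC k)
  have hcs1 : (B.mul (trigC k) (trigS k)).1 = 0 := by
    simpa [trigCounit] using B.counit_mul (trigC k) (trigS k)
  have vcc : B.mul (trigC k) (trigC k) = ((1 : k), β) := by
    rw [Prod.ext_iff]; exact ⟨hcc1, rfl⟩
  -- unitality relations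
  have honeCS : B.one = trigC k + trigS k := by
    rw [hone, pair_eq]; simp
  have h1 : B.mul (trigC k) (trigC k) + B.mul (trigS k) (trigC k) = trigC k := by
    have := B.one_mul (trigC k)
    rw [honeCS, map_add, LinearMap.add_apply] at this
    exact this
  have h1' : B.mul (trigC k) (trigC k) + B.mul (trigC k) (trigS k) = trigC k := by
    have := B.mul_one (trigC k)
    rw [honeCS, map_add] at this
    exact this
  have h1'' : B.mul (trigC k) (trigS k) + B.mul (trigS k) (trigS k) = trigS k := by
    have := B.one_mul (trigS k)
    rw [honeCS, map_add, LinearMap.add_apply] at this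
    exact this
  have vsc : B.mul (trigS k) (trigC k) = ((0 : k), -β) := by
    rw [eq_sub_of_add_eq' h1, vcc]
    simp [trigC, Prod.ext_iff]
  have vcs : B.mul (trigC k) (trigS k) = ((0 : k), -β) := by
    rw [eq_sub_of_add_eq' h1', vcc]
    simp [trigC, Prod.ext_iff]
  have vss : B.mul (trigS k) (trigS k) = ((0 : k), 1 + β) := by
    rw [eq_sub_of_add_eq' h1'', vcs]
    simp [trigS, Prod.ext_iff]
  -- determine the multiplication completely
  apply LinearMap.ext; intro x; apply LinearMap.ext; intro y
  obtain ⟨x1, x2⟩ := x; obtain ⟨y1, y2⟩ := y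
  rw [pair_eq k x1 x2, pair_eq k y1 y2]
  simp only [map_add, map_smul, LinearMap.add_apply, LinearMap.smul_apply]
  rw [vcc, vsc, vcs, vss, m_cc, m_cs, m_sc, m_ss]
  simp only [Prod.ext_iff, Prod.fst_add, Prod.snd_add, Prod.smul_fst, Prod.smul_snd,
    smul_eq_mul]
  constructor
  · trivial
  · linear_combination -(β * x1 * y2 + β * x2 * y1) * h2
end

/-- In characteristic 2, every bialgebra structure on the trigonometric
coalgebra has multiplication table `c² = c + l s`, `cs = sc = l s`,
`s² = (l+1) s` for a unique `l ∈ k`; this sets up a bijection between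
bialgebra structures on `C_k` and elements of `k`. -/
theorem trig_bialgebras_char_two_equiv (k : Type*) [Field k] [CharP k 2] :
    ∃ e : BialgebraStructure k (k × k) (trigComul k) (trigCounit k) ≃ k,
      ∀ B : BialgebraStructure k (k × k) (trigComul k) (trigCounit k),
        B.mul (trigC k) (trigC k) = trigC k + e B • trigS k ∧
        B.mul (trigC k) (trigS k) = e B • trigS k ∧
        B.mul (trigS k) (trigC k) = e B • trigS k ∧
        B.mul (trigS k) (trigS k) = (e B + 1) • trigS k := by
  refine ⟨{ toFun := fun B => (B.mul (trigC k) (trigC k)).2,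
            invFun := trigBS k,
            left_inv := ?_, right_inv := ?_ }, ?_⟩
  · intro B
    exact BS_ext ((trig_table k B).2).symm ((trig_table k B).1).symm
  · intro l
    show (trigMul k l (trigC k) (trigC k)).2 = l
    rw [m_cc]
  · intro B
    have hm := (trig_table k B).2
    simp only [Equiv.coe_fn_mk]
    rw [hm, m_cc, m_cs, m_sc, m_ss]
    refine ⟨?_, ?_, ?_, ?_⟩ <;> simp [trigC, trigS, Prod.ext_iff]
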